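/- Let so(3,1) be the 6-dimensional real Lie algebra with basis (e_1,…,e_6) and nonvanishing brackets [e_1,e_2]=e_3, [e_1,e_3]=−e_2, [e_1,e_4]=e_5, [e_1,e_5]=−e_4, [e_2,e_3]=e_1, [e_2,e_4]=e_6, [e_2,e_6]=−e_4, [e_3,e_5]=e_6, [e_3,e_6]=−e_5, [e_4,e_5]=−e_1, [e_4,e_6]=−e_2, [e_5,e_6]=−e_3. Set h = span(e_3, e_4, e_1+e_5, e_2+e_6), θ_1 = −e_1*∧e_2* − e_1*∧e_4* + e_2*∧e_3* + e_3*∧e_6* − e_4*∧e_5* + e_5*∧e_6*, and θ_2 = e_1*∧e_3* − e_1*∧e_5* + e_2*∧e_4* − e_2*∧e_6* + e_3*∧e_5* + e_4*∧e_6*. Then (h, θ_1, θ_2) is a 2-symplectic structure on so(3,1): h is a 4-dimensional Lie subalgebra, θ_1 and θ_2 are 2-cocycles vanishing on h×h, and {u : θ_1(u,·) = 0} ∩ {u : θ_2(u,·) = 0} = {0}. -/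

import Mathlib

/-- The alternating bilinear form `eᵢ* ∧ eⱼ*` associated to a basis `b`:
`(u, v) ↦ eᵢ*(u) eⱼ*(v) − eⱼ*(u) eᵢ*(v)`. -/
noncomputable def wedge {L : Type*} [AddCommGroup L] [Module ℝ L]
    (b : Module.Basis (Fin 6) ℝ L) (i j : Fin 6) (u v : L) : ℝ :=
  b.repr u i * b.repr v j - b.repr u j * b.repr v i

/-- `θ₁ = −e₁*∧e₂* − e₁*∧e₄* + e₂*∧e₃* + e₃*∧e₆* − e₄*∧e₅* + e₅*∧e₆*` (0-indexed). -/
noncomputable def soTheta1 {L : Type*} [AddCommGroup L] [Module ℝ L]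
    (b : Module.Basis (Fin 6) ℝ L) (u v : L) : ℝ :=
  -wedge b 0 1 u v - wedge b 0 3 u v + wedge b 1 2 u v + wedge b 2 5 u v
    - wedge b 3 4 u v + wedge b 4 5 u v

/-- `θ₂ = e₁*∧e₃* − e₁*∧e₅* + e₂*∧e₄* − e₂*∧e₆* + e₃*∧e₅* + e₄*∧e₆*` (0-indexed). -/
noncomputable def soTheta2 {L : Type*} [AddCommGroup L] [Module ℝ L]
    (b : Module.Basis (Fin 6) ℝ L) (u v : L) : ℝ :=
  wedge b 0 2 u v - wedge b 0 4 u v + wedge b 1 3 u v - wedge b 1 5 u v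
    + wedge b 2 4 u v + wedge b 3 5 u v

section Aux

variable {L : Type*} [AddCommGroup L] [Module ℝ L] (b : Module.Basis (Fin 6) ℝ L)

lemma soTheta1_add_left (x y v : L) :
    soTheta1 b (x + y) v = soTheta1 b x v + soTheta1 b y v := by
  simp only [soTheta1, wedge, map_add, Finsupp.coe_add, Pi.add_apply]; ring

lemma soTheta1_smul_left (a : ℝ) (x v : L) :
    soTheta1 b (a • x) v = a * soTheta1 b x v := by
  simp only [soTheta1, wedge, map_smul, Finsupp.coe_smul, Pi.smul_apply, smul_eq_mul]; ring

lemma soTheta1_add_right (x y v : L) :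
    soTheta1 b v (x + y) = soTheta1 b v x + soTheta1 b v y := by
  simp only [soTheta1, wedge, map_add, Finsupp.coe_add, Pi.add_apply]; ring

lemma soTheta1_smul_right (a : ℝ) (x v : L) :
    soTheta1 b v (a • x) = a * soTheta1 b v x := by
  simp only [soTheta1, wedge, map_smul, Finsupp.coe_smul, Pi.smul_apply, smul_eq_mul]; ring

lemma soTheta1_zero_left (v : L) : soTheta1 b 0 v = 0 := by
  simp [soTheta1, wedge]

lemma soTheta1_zero_right (v : L) : soTheta1 b v 0 = 0 := by
  simp [soTheta1, wedge]

lemma soTheta2_add_left (x y v : L) :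
    soTheta2 b (x + y) v = soTheta2 b x v + soTheta2 b y v := by
  simp only [soTheta2, wedge, map_add, Finsupp.coe_add, Pi.add_apply]; ring

lemma soTheta2_smul_left (a : ℝ) (x v : L) :
    soTheta2 b (a • x) v = a * soTheta2 b x v := by
  simp only [soTheta2, wedge, map_smul, Finsupp.coe_smul, Pi.smul_apply, smul_eq_mul]; ring

lemma soTheta2_add_right (x y v : L) :
    soTheta2 b v (x + y) = soTheta2 b v x + soTheta2 b v y := by
  simp only [soTheta2, wedge, map_add, Finsupp.coe_add, Pi.add_apply]; ring

lemma soTheta2_smul_right (a : ℝ) (x v : L) :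
    soTheta2 b v (a • x) = a * soTheta2 b v x := by
  simp only [soTheta2, wedge, map_smul, Finsupp.coe_smul, Pi.smul_apply, smul_eq_mul]; ring

lemma soTheta2_zero_left (v : L) : soTheta2 b 0 v = 0 := by
  simp [soTheta2, wedge]

lemma soTheta2_zero_right (v : L) : soTheta2 b v 0 = 0 := by
  simp [soTheta2, wedge]

end Aux

theorem so31_bracket_eq
    {L : Type*} [LieRing L] [LieAlgebra ℝ L]
    (b : Module.Basis (Fin 6) ℝ L)
    (h12 : ⁅b 0, b 1⁆ = b 2) (h13 : ⁅b 0, b 2⁆ = -b 1)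
    (h14 : ⁅b 0, b 3⁆ = b 4) (h15 : ⁅b 0, b 4⁆ = -b 3) (h16 : ⁅b 0, b 5⁆ = 0)
    (h23 : ⁅b 1, b 2⁆ = b 0) (h24 : ⁅b 1, b 3⁆ = b 5)
    (h25 : ⁅b 1, b 4⁆ = 0) (h26 : ⁅b 1, b 5⁆ = -b 3)
    (h34 : ⁅b 2, b 3⁆ = 0) (h35 : ⁅b 2, b 4⁆ = b 5) (h36 : ⁅b 2, b 5⁆ = -b 4)
    (h45 : ⁅b 3, b 4⁆ = -b 0) (h46 : ⁅b 3, b 5⁆ = -b 1)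
    (h56 : ⁅b 4, b 5⁆ = -b 2) (u v : L) :
    ⁅u, v⁆ =
      (b.repr u 1 * b.repr v 2 - b.repr u 2 * b.repr v 1
        - b.repr u 3 * b.repr v 4 + b.repr u 4 * b.repr v 3) • b 0 +
      (-(b.repr u 0 * b.repr v 2) + b.repr u 2 * b.repr v 0
        - b.repr u 3 * b.repr v 5 + b.repr u 5 * b.repr v 3) • b 1 +
      (b.repr u 0 * b.repr v 1 - b.repr u 1 * b.repr v 0
        - b.repr u 4 * b.repr v 5 + b.repr u 5 * b.repr v 4) • b 2 +
      (-(b.repr u 0 * b.repr v 4) + b.repr u 4 * b.repr v 0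
        - b.repr u 1 * b.repr v 5 + b.repr u 5 * b.repr v 1) • b 3 +
      (b.repr u 0 * b.repr v 3 - b.repr u 3 * b.repr v 0
        - b.repr u 2 * b.repr v 5 + b.repr u 5 * b.repr v 2) • b 4 +
      (b.repr u 1 * b.repr v 3 - b.repr u 3 * b.repr v 1
        + b.repr u 2 * b.repr v 4 - b.repr u 4 * b.repr v 2) • b 5 := by
  have h21 : ⁅b 1, b 0⁆ = -b 2 := by rw [← lie_skew, h12]
  have h31 : ⁅b 2, b 0⁆ = b 1 := by rw [← lie_skew, h13]; simp
  have h41 : ⁅b 3, b 0⁆ = -b 4 := by rw [← lie_skew, h14]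
  have h51 : ⁅b 4, b 0⁆ = b 3 := by rw [← lie_skew, h15]; simp
  have h61 : ⁅b 5, b 0⁆ = 0 := by rw [← lie_skew, h16]; simp
  have h32 : ⁅b 2, b 1⁆ = -b 0 := by rw [← lie_skew, h23]
  have h42 : ⁅b 3, b 1⁆ = -b 5 := by rw [← lie_skew, h24]
  have h52 : ⁅b 4, b 1⁆ = 0 := by rw [← lie_skew, h25]; simp
  have h62 : ⁅b 5, b 1⁆ = b 3 := by rw [← lie_skew, h26]; simp
  have h43 : ⁅b 3, b 2⁆ = 0 := by rw [← lie_skew, h34]; simp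
  have h53 : ⁅b 4, b 2⁆ = -b 5 := by rw [← lie_skew, h35]
  have h63 : ⁅b 5, b 2⁆ = b 4 := by rw [← lie_skew, h36]; simp
  have h54 : ⁅b 4, b 3⁆ = b 0 := by rw [← lie_skew, h45]; simp
  have h64 : ⁅b 5, b 3⁆ = b 1 := by rw [← lie_skew, h46]; simp
  have h65 : ⁅b 5, b 4⁆ = b 2 := by rw [← lie_skew, h56]; simp
  have hu := b.sum_repr u
  have hv := b.sum_repr v
  rw [Fin.sum_univ_six] at hu hv
  conv_lhs => rw [← hu, ← hv]
  simp only [add_lie, lie_add, smul_lie, lie_smul, lie_self,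
    h12, h13, h14, h15, h16, h23, h24, h25, h26, h34, h35, h36, h45, h46, h56,
    h21, h31, h41, h51, h61, h32, h42, h52, h62, h43, h53, h63, h54, h64, h65,
    smul_neg, smul_zero, smul_smul]
  module

set_option maxHeartbeats 2000000 in
theorem so31_two_symplectic
    {L : Type*} [LieRing L] [LieAlgebra ℝ L]
    (b : Module.Basis (Fin 6) ℝ L)
    (h12 : ⁅b 0, b 1⁆ = b 2) (h13 : ⁅b 0, b 2⁆ = -b 1)
    (h14 : ⁅b 0, b 3⁆ = b 4) (h15 : ⁅b 0, b 4⁆ = -b 3) (h16 : ⁅b 0, b 5⁆ = 0)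
    (h23 : ⁅b 1, b 2⁆ = b 0) (h24 : ⁅b 1, b 3⁆ = b 5)
    (h25 : ⁅b 1, b 4⁆ = 0) (h26 : ⁅b 1, b 5⁆ = -b 3)
    (h34 : ⁅b 2, b 3⁆ = 0) (h35 : ⁅b 2, b 4⁆ = b 5) (h36 : ⁅b 2, b 5⁆ = -b 4)
    (h45 : ⁅b 3, b 4⁆ = -b 0) (h46 : ⁅b 3, b 5⁆ = -b 1)
    (h56 : ⁅b 4, b 5⁆ = -b 2) :
    (∃ H : LieSubalgebra ℝ L,
      H.toSubmodule = Submodule.span ℝ {b 2, b 3, b 0 + b 4, b 1 + b 5} ∧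
      Module.finrank ℝ H = 4) ∧
    (∀ u : L, soTheta1 b u u = 0 ∧ soTheta2 b u u = 0) ∧
    (∀ u v w : L,
      soTheta1 b ⁅u, v⁆ w + soTheta1 b ⁅v, w⁆ u + soTheta1 b ⁅w, u⁆ v = 0) ∧
    (∀ u v w : L,
      soTheta2 b ⁅u, v⁆ w + soTheta2 b ⁅v, w⁆ u + soTheta2 b ⁅w, u⁆ v = 0) ∧
    (∀ u ∈ Submodule.span ℝ ({b 2, b 3, b 0 + b 4, b 1 + b 5} : Set L),
      ∀ v ∈ Submodule.span ℝ ({b 2, b 3, b 0 + b 4, b 1 + b 5} : Set L),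
        soTheta1 b u v = 0 ∧ soTheta2 b u v = 0) ∧
    (∀ u : L, (∀ v : L, soTheta1 b u v = 0) → (∀ v : L, soTheta2 b u v = 0) →
      u = 0) := by
  have br := so31_bracket_eq b h12 h13 h14 h15 h16 h23 h24 h25 h26 h34 h35 h36 h45 h46 h56
  set S : Set L := {b 2, b 3, b 0 + b 4, b 1 + b 5} with hS
  refine ⟨?_, ?_, ?_, ?_, ?_, ?_⟩
  · -- the Lie subalgebra
    have genbr : ∀ x ∈ S, ∀ y ∈ S, ⁅x, y⁆ ∈ Submodule.span ℝ S := by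
      have m0 : b 2 ∈ Submodule.span ℝ S := Submodule.subset_span (by simp [hS])
      have m1 : b 3 ∈ Submodule.span ℝ S := Submodule.subset_span (by simp [hS])
      have m2 : b 0 + b 4 ∈ Submodule.span ℝ S := Submodule.subset_span (by simp [hS])
      have m3 : b 1 + b 5 ∈ Submodule.span ℝ S := Submodule.subset_span (by simp [hS])
      have h21 : ⁅b 1, b 0⁆ = -b 2 := by rw [← lie_skew, h12]
      have h31 : ⁅b 2, b 0⁆ = b 1 := by rw [← lie_skew, h13]; simp
      have h41 : ⁅b 3, b 0⁆ = -b 4 := by rw [← lie_skew, h14]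
      have h51 : ⁅b 4, b 0⁆ = b 3 := by rw [← lie_skew, h15]; simp
      have h61 : ⁅b 5, b 0⁆ = 0 := by rw [← lie_skew, h16]; simp
      have h32 : ⁅b 2, b 1⁆ = -b 0 := by rw [← lie_skew, h23]
      have h42 : ⁅b 3, b 1⁆ = -b 5 := by rw [← lie_skew, h24]
      have h52 : ⁅b 4, b 1⁆ = 0 := by rw [← lie_skew, h25]; simp
      have h62 : ⁅b 5, b 1⁆ = b 3 := by rw [← lie_skew, h26]; simp
      have h43 : ⁅b 3, b 2⁆ = 0 := by rw [← lie_skew, h34]; simp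
      have h53 : ⁅b 4, b 2⁆ = -b 5 := by rw [← lie_skew, h35]
      have h63 : ⁅b 5, b 2⁆ = b 4 := by rw [← lie_skew, h36]; simp
      have h54 : ⁅b 4, b 3⁆ = b 0 := by rw [← lie_skew, h45]; simp
      have h64 : ⁅b 5, b 3⁆ = b 1 := by rw [← lie_skew, h46]; simp
      have h65 : ⁅b 5, b 4⁆ = b 2 := by rw [← lie_skew, h56]; simp
      intro x hx y hy
      simp only [hS, Set.mem_insert_iff, Set.mem_singleton_iff] at hx hy
      rcases hx with rfl | rfl | rfl | rfl <;> rcases hy with rfl | rfl | rfl | rfl <;>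
        simp only [lie_add, add_lie, lie_self, h12, h13, h14, h15, h16, h23, h24, h25,
          h26, h34, h35, h36, h45, h46, h56, h21, h31, h41, h51, h61, h32, h42, h52,
          h62, h43, h53, h63, h54, h64, h65, add_zero, zero_add] <;>
        first
        | exact Submodule.zero_mem _
        | exact m0 | exact m1 | exact m2 | exact m3
        | (rw [show (b 4 + b 0 : L) = b 0 + b 4 by abel]; exact m2)
        | (rw [show (b 5 + b 1 : L) = b 1 + b 5 by abel]; exact m3)
        | (rw [show (-b 0 + -b 4 : L) = -(b 0 + b 4) by abel]; exact Submodule.neg_mem _ m2)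
        | (rw [show (-b 4 + -b 0 : L) = -(b 0 + b 4) by abel]; exact Submodule.neg_mem _ m2)
        | (rw [show (-b 1 + -b 5 : L) = -(b 1 + b 5) by abel]; exact Submodule.neg_mem _ m3)
        | (rw [show (-b 5 + -b 1 : L) = -(b 1 + b 5) by abel]; exact Submodule.neg_mem _ m3)
        | (rw [show (-b 3 + b 3 : L) = 0 by abel]; exact Submodule.zero_mem _)
        | (rw [show (b 3 + -b 3 : L) = 0 by abel]; exact Submodule.zero_mem _)
        | (rw [show (b 2 + -b 2 : L) = 0 by abel]; exact Submodule.zero_mem _)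
        | (rw [show (-b 2 + b 2 : L) = 0 by abel]; exact Submodule.zero_mem _)
    refine ⟨{ toSubmodule := Submodule.span ℝ S,
              lie_mem' := ?_ }, rfl, ?_⟩
    · intro x y hx hy
      replace hx : x ∈ Submodule.span ℝ S := hx
      replace hy : y ∈ Submodule.span ℝ S := hy
      show ⁅x, y⁆ ∈ Submodule.span ℝ S
      induction hx using Submodule.span_induction with
      | mem x hxS =>
        induction hy using Submodule.span_induction with
        | mem y hyS => exact genbr x hxS y hyS
        | zero => simp
        | add y z _ _ hy hz => rw [lie_add]; exact Submodule.add_mem _ hy hz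
        | smul a y _ hy => rw [lie_smul]; exact Submodule.smul_mem _ a hy
      | zero => simp
      | add x z _ _ hx' hz' => rw [add_lie]; exact Submodule.add_mem _ hx' hz'
      | smul a x _ hx' => rw [smul_lie]; exact Submodule.smul_mem _ a hx'
    · -- finrank
      have hv : Set.range (![b 2, b 3, b 0 + b 4, b 1 + b 5] : Fin 4 → L) = S := by
        ext x
        constructor
        · rintro ⟨i, rfl⟩; fin_cases i <;> simp [hS]
        · intro hx
          simp only [hS, Set.mem_insert_iff, Set.mem_singleton_iff] at hx
          rcases hx with rfl | rfl | rfl | rfl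
          exacts [⟨0, by simp⟩, ⟨1, by simp⟩, ⟨2, by simp⟩, ⟨3, by simp⟩]
      have hli : LinearIndependent ℝ (![b 2, b 3, b 0 + b 4, b 1 + b 5] : Fin 4 → L) := by
        apply LinearIndependent.of_comp
          (LinearMap.pi (fun i : Fin 4 => b.coord ((![2, 3, 0, 1] : Fin 4 → Fin 6) i)))
        have : (⇑(LinearMap.pi (fun i : Fin 4 => b.coord ((![2, 3, 0, 1] : Fin 4 → Fin 6) i))) ∘
            (![b 2, b 3, b 0 + b 4, b 1 + b 5] : Fin 4 → L)) = ⇑(Pi.basisFun ℝ (Fin 4)) := by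
          funext j
          funext i
          fin_cases j <;> fin_cases i <;>
            simp [LinearMap.pi_apply, Module.Basis.coord_apply, Module.Basis.repr_self_apply,
              Pi.basisFun_apply]
        rw [this]
        exact (Pi.basisFun ℝ (Fin 4)).linearIndependent
      have h4 := finrank_span_eq_card hli
      rw [hv] at h4
      have : Module.finrank ℝ (Submodule.span ℝ S) = 4 := by
        rw [h4]; rfl
      exact this
  · -- alternating
    intro u
    constructor <;> · simp only [soTheta1, soTheta2, wedge]; ring
  · -- cocycle 1
    intro u v w
    rw [br u v, br v w, br w u]
    simp only [soTheta1, wedge, map_add, map_smul, Finsupp.coe_add, Finsupp.coe_smul,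
      Pi.add_apply, Pi.smul_apply, smul_eq_mul, Module.Basis.repr_self_apply]
    simp only [Fin.isValue, Fin.reduceEq, reduceIte, if_true, mul_one, mul_zero, zero_mul,
      one_mul, add_zero, zero_add, sub_zero, zero_sub, neg_zero]
    ring
  · -- cocycle 2
    intro u v w
    rw [br u v, br v w, br w u]
    simp only [soTheta2, wedge, map_add, map_smul, Finsupp.coe_add, Finsupp.coe_smul,
      Pi.add_apply, Pi.smul_apply, smul_eq_mul, Module.Basis.repr_self_apply]
    simp only [Fin.isValue, Fin.reduceEq, reduceIte, if_true, mul_one, mul_zero, zero_mul,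
      one_mul, add_zero, zero_add, sub_zero, zero_sub, neg_zero]
    ring
  · -- vanishing on h × h
    have base : ∀ x ∈ S, ∀ y ∈ S, soTheta1 b x y = 0 ∧ soTheta2 b x y = 0 := by
      intro x hx y hy
      simp only [hS, Set.mem_insert_iff, Set.mem_singleton_iff] at hx hy
      rcases hx with rfl | rfl | rfl | rfl <;> rcases hy with rfl | rfl | rfl | rfl <;>
        refine ⟨?_, ?_⟩ <;>
        · simp only [soTheta1, soTheta2, wedge, map_add, Finsupp.coe_add, Pi.add_apply,
            Module.Basis.repr_self_apply]
          simp only [Fin.isValue, Fin.reduceEq, reduceIte, if_true, mul_one, mul_zero,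
            zero_mul, one_mul, add_zero, zero_add, sub_zero, zero_sub, neg_zero]
          try ring
    intro u hu v hv
    induction hu using Submodule.span_induction with
    | mem x hxS =>
      induction hv using Submodule.span_induction with
      | mem y hyS => exact base x hxS y hyS
      | zero => exact ⟨soTheta1_zero_right b x, soTheta2_zero_right b x⟩
      | add y z _ _ hy hz =>
        exact ⟨by rw [soTheta1_add_right, hy.1, hz.1, add_zero],
               by rw [soTheta2_add_right, hy.2, hz.2, add_zero]⟩
      | smul a y _ hy =>
        exact ⟨by rw [soTheta1_smul_right, hy.1, mul_zero],
               by rw [soTheta2_smul_right, hy.2, mul_zero]⟩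
    | zero => exact ⟨soTheta1_zero_left b v, soTheta2_zero_left b v⟩
    | add x z _ _ hx' hz' =>
      exact ⟨by rw [soTheta1_add_left, hx'.1, hz'.1, add_zero],
             by rw [soTheta2_add_left, hx'.2, hz'.2, add_zero]⟩
    | smul a x _ hx' =>
      exact ⟨by rw [soTheta1_smul_left, hx'.1, mul_zero],
             by rw [soTheta2_smul_left, hx'.2, mul_zero]⟩
  · -- nondegeneracy
    intro u h1 h2
    have e := fun j => h1 (b j)
    have f := fun j => h2 (b j)
    simp only [soTheta1, soTheta2, wedge, Module.Basis.repr_self_apply] at e f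
    have e0 := e 0; have e1 := e 1; have e2 := e 2
    have e3 := e 3; have e4 := e 4; have e5 := e 5
    have f0 := f 0; have f1 := f 1; have f2 := f 2
    have f3 := f 3; have f4 := f 4; have f5 := f 5
    simp only [Fin.isValue, Fin.reduceEq, reduceIte, if_true, mul_one, mul_zero,
      zero_mul, one_mul, add_zero, zero_add, sub_zero, zero_sub, neg_zero, neg_neg,
      sub_self, neg_sub] at e0 e1 e2 e3 e4 e5 f0 f1 f2 f3 f4 f5
    rw [← b.forall_coord_eq_zero_iff]
    intro i
    rw [Module.Basis.coord_apply]
    fin_cases i <;> simp <;> linarith
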